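/- arXiv:2002.09649 — 3 statements merged into one kernel-verified Lean document; each statement's English description precedes it below -/
import Mathlib

section
/- Let A = [A_{i,j}]_{i,j=1}^m ∈ M_m(M_n) be positive semidefinite. Then (tr A) I_{mn} − A ≥ I_m ⊗ (tr₁ A) − (tr₂ A) ⊗ I_n and (tr A) I_{mn} − A ≥ (tr₂ A) ⊗ I_n − I_m ⊗ (tr₁ A). -/
set_option maxHeartbeats 1600000

open Matrix Kronecker
open scoped ComplexOrder

/-- The first partial trace of an `m × m` block matrix with `n × n` blocks:
the sum of the diagonal blocks. -/
noncomputable def ptrace1 (m n : ℕ) (A : Matrix (Fin m × Fin n) (Fin m × Fin n) ℂ) :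
    Matrix (Fin n) (Fin n) ℂ :=
  Matrix.of fun r s => ∑ i, A (i, r) (i, s)

/-- The second partial trace of an `m × m` block matrix with `n × n` blocks:
the `m × m` matrix of traces of the blocks. -/
noncomputable def ptrace2 (m n : ℕ) (A : Matrix (Fin m × Fin n) (Fin m × Fin n) ℂ) :
    Matrix (Fin m) (Fin m) ℂ :=
  Matrix.of fun i j => ∑ r, A (i, r) (j, r)

private lemma swap12 {ι κ : Type*} [Fintype ι] [Fintype κ] (f : ι → ι → κ → κ → ℂ) :
    (∑ i, ∑ j, ∑ r, ∑ s, f i j r s) = ∑ i, ∑ j, ∑ r, ∑ s, f j i r s :=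
  Finset.sum_comm

private lemma swap34 {ι κ : Type*} [Fintype ι] [Fintype κ] (f : ι → ι → κ → κ → ℂ) :
    (∑ i, ∑ j, ∑ r, ∑ s, f i j r s) = ∑ i, ∑ j, ∑ r, ∑ s, f i j s r :=
  Finset.sum_congr rfl fun _ _ => Finset.sum_congr rfl fun _ _ => Finset.sum_comm

private lemma swapmid {ι κ α β : Type*} [Fintype ι] [Fintype κ] [Fintype α] [Fintype β]
    (f : ι → α → κ → β → ℂ) :
    (∑ i, ∑ r, ∑ j, ∑ s, f i r j s) = ∑ i, ∑ j, ∑ r, ∑ s, f i r j s :=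
  Finset.sum_congr rfl fun _ _ => Finset.sum_comm

private lemma swapblocks {ι κ : Type*} [Fintype ι] [Fintype κ] (f : ι → ι → κ → κ → ℂ) :
    (∑ r, ∑ s, ∑ i, ∑ j, f i j r s) = ∑ i, ∑ j, ∑ r, ∑ s, f i j r s :=
  calc (∑ r, ∑ s, ∑ i, ∑ j, f i j r s)
      = ∑ r, ∑ i, ∑ s, ∑ j, f i j r s :=
        Finset.sum_congr rfl fun _ _ => Finset.sum_comm
    _ = ∑ i, ∑ r, ∑ s, ∑ j, f i j r s := Finset.sum_comm
    _ = ∑ i, ∑ r, ∑ j, ∑ s, f i j r s :=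
        Finset.sum_congr rfl fun _ _ => Finset.sum_congr rfl fun _ _ => Finset.sum_comm
    _ = ∑ i, ∑ j, ∑ r, ∑ s, f i j r s :=
        Finset.sum_congr rfl fun _ _ => Finset.sum_comm

private lemma rot3 {α β γ : Type*} [Fintype α] [Fintype β] [Fintype γ] (f : α → β → γ → ℂ) :
    ∑ a, ∑ b, ∑ c, f a b c = ∑ b, ∑ c, ∑ a, f a b c :=
  Finset.sum_comm.trans (Finset.sum_congr rfl fun _ _ => Finset.sum_comm)

private lemma irot3 {α β γ : Type*} [Fintype α] [Fintype β] [Fintype γ] (f : α → β → γ → ℂ) :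
    ∑ a, ∑ b, ∑ c, f a b c = ∑ c, ∑ a, ∑ b, f a b c :=
  (Finset.sum_congr rfl fun _ _ => Finset.sum_comm).trans Finset.sum_comm

private lemma key {ι κ : Type*} [Fintype ι] [Fintype κ] (u v : ι × κ → ℂ) :
    0 ≤ (∑ p, u p * star (u p)) * (∑ q, star (v q) * v q)
      - (∑ p, star (v p) * u p) * star (∑ p, star (v p) * u p)
      - (∑ i, ∑ j, (∑ r, star (v (i, r)) * u (j, r)) * star (∑ r, star (v (i, r)) * u (j, r)))
      + (∑ r, ∑ s, (∑ i, star (v (i, r)) * u (i, s)) * star (∑ i, star (v (i, r)) * u (i, s))) := by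
  set E : ι → ι → κ → κ → ℂ := fun i j r s =>
    u (i, r) * v (j, s) - u (j, s) * v (i, r) - u (i, s) * v (j, r) + u (j, r) * v (i, s) with hE
  set G : ι → ι → κ → κ → ℂ := fun i j r s =>
    u (i, r) * star (u (i, r)) * (star (v (j, s)) * v (j, s))
    - (star (v (i, r)) * u (i, r)) * (v (j, s) * star (u (j, s)))
    - (star (v (i, r)) * u (j, r)) * (v (i, s) * star (u (j, s)))
    + (star (v (i, r)) * u (i, s)) * (v (j, r) * star (u (j, s))) with hG
  have hexpand : (∑ p, u p * star (u p)) * (∑ q, star (v q) * v q)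
      - (∑ p, star (v p) * u p) * star (∑ p, star (v p) * u p)
      - (∑ i, ∑ j, (∑ r, star (v (i, r)) * u (j, r)) * star (∑ r, star (v (i, r)) * u (j, r)))
      + (∑ r, ∑ s, (∑ i, star (v (i, r)) * u (i, s)) * star (∑ i, star (v (i, r)) * u (i, s)))
      = ∑ i, ∑ j, ∑ r, ∑ s, G i j r s := by
    have h1 : (∑ p, u p * star (u p)) * (∑ q, star (v q) * v q)
        = ∑ i, ∑ j, ∑ r, ∑ s, (u (i, r) * star (u (i, r))) * (star (v (j, s)) * v (j, s)) := by
      rw [Fintype.sum_prod_type, Fintype.sum_prod_type, Finset.sum_mul_sum]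
      exact Finset.sum_congr rfl fun i _ => Finset.sum_congr rfl fun j _ =>
        Finset.sum_mul_sum _ _ _ _
    have h2 : (∑ p, star (v p) * u p) * star (∑ p, star (v p) * u p)
        = ∑ i, ∑ j, ∑ r, ∑ s, (star (v (i, r)) * u (i, r)) * (v (j, s) * star (u (j, s))) := by
      rw [star_sum]
      simp only [star_mul', star_star]
      rw [Fintype.sum_prod_type, Fintype.sum_prod_type, Finset.sum_mul_sum]
      exact Finset.sum_congr rfl fun i _ => Finset.sum_congr rfl fun j _ => by
        rw [Finset.sum_mul_sum]
    have h3 : (∑ i, ∑ j, (∑ r, star (v (i, r)) * u (j, r)) * star (∑ r, star (v (i, r)) * u (j, r)))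
        = ∑ i, ∑ j, ∑ r, ∑ s, (star (v (i, r)) * u (j, r)) * (v (i, s) * star (u (j, s))) := by
      refine Finset.sum_congr rfl fun i _ => Finset.sum_congr rfl fun j _ => ?_
      rw [star_sum]
      simp only [star_mul', star_star]
      rw [Finset.sum_mul_sum]
    have h4 : (∑ r, ∑ s, (∑ i, star (v (i, r)) * u (i, s)) * star (∑ i, star (v (i, r)) * u (i, s)))
        = ∑ i, ∑ j, ∑ r, ∑ s, (star (v (i, r)) * u (i, s)) * (v (j, r) * star (u (j, s))) := by
      rw [← swapblocks fun i j r s => (star (v (i, r)) * u (i, s)) * (v (j, r) * star (u (j, s)))]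
      refine Finset.sum_congr rfl fun r _ => Finset.sum_congr rfl fun s _ => ?_
      rw [star_sum]
      simp only [star_mul', star_star]
      rw [Finset.sum_mul_sum]
    rw [h1, h2, h3, h4]
    simp only [hG, ← Finset.sum_sub_distrib, ← Finset.sum_add_distrib]
  have hmain : (4 : ℂ) * (∑ i, ∑ j, ∑ r, ∑ s, G i j r s)
      = ∑ i, ∑ j, ∑ r, ∑ s, star (E i j r s) * E i j r s := by
    have h1 := swap12 G
    have h2 := swap34 G
    have h3 := (swap12 G).trans (swap34 fun i j r s => G j i r s)
    calc (4 : ℂ) * (∑ i, ∑ j, ∑ r, ∑ s, G i j r s)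
        = (∑ i, ∑ j, ∑ r, ∑ s, G i j r s) + (∑ i, ∑ j, ∑ r, ∑ s, G j i r s)
          + (∑ i, ∑ j, ∑ r, ∑ s, G i j s r) + (∑ i, ∑ j, ∑ r, ∑ s, G j i s r) := by
          rw [← h1, ← h2, ← h3]; ring
      _ = ∑ i, ∑ j, ∑ r, ∑ s, (G i j r s + G j i r s + G i j s r + G j i s r) := by
          simp only [← Finset.sum_add_distrib]
      _ = ∑ i, ∑ j, ∑ r, ∑ s, star (E i j r s) * E i j r s := by
          refine Finset.sum_congr rfl fun i _ => Finset.sum_congr rfl fun j _ =>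
            Finset.sum_congr rfl fun r _ => Finset.sum_congr rfl fun s _ => ?_
          simp only [hG, hE, star_add, star_sub, star_mul', star_star]
          ring
  rw [hexpand]
  have h14 : (0:ℂ) ≤ 1/4 := by
    rw [show (1/4 : ℂ) = ((1/4 : ℝ) : ℂ) by norm_num]
    rw [Complex.zero_le_real]; norm_num
  have h4' : (∑ i, ∑ j, ∑ r, ∑ s, G i j r s)
      = (1/4 : ℂ) * ∑ i, ∑ j, ∑ r, ∑ s, star (E i j r s) * E i j r s := by
    rw [← hmain]; ring
  rw [h4']
  refine mul_nonneg h14 ?_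
  exact Finset.sum_nonneg fun i _ => Finset.sum_nonneg fun j _ =>
    Finset.sum_nonneg fun r _ => Finset.sum_nonneg fun s _ => star_mul_self_nonneg _

private lemma key2 {ι κ : Type*} [Fintype ι] [Fintype κ] (u v : ι → κ → ℂ) :
    0 ≤ (∑ i, ∑ r, u i r * star (u i r)) * (∑ j, ∑ s, star (v j s) * v j s)
      - (∑ i, ∑ r, star (v i r) * u i r) * star (∑ i, ∑ r, star (v i r) * u i r)
      - (∑ i, ∑ j, (∑ r, star (v i r) * u j r) * star (∑ r, star (v i r) * u j r))
      + (∑ r, ∑ s, (∑ i, star (v i r) * u i s) * star (∑ i, star (v i r) * u i s)) := by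
  have h := key (fun p : ι × κ => u p.1 p.2) (fun p : ι × κ => v p.1 p.2)
  simpa only [Fintype.sum_prod_type] using h

private lemma key2' {ι κ : Type*} [Fintype ι] [Fintype κ] (u v : ι → κ → ℂ) :
    0 ≤ (∑ i, ∑ r, u i r * star (u i r)) * (∑ j, ∑ s, star (v j s) * v j s)
      - (∑ i, ∑ r, star (v i r) * u i r) * star (∑ i, ∑ r, star (v i r) * u i r)
      - (∑ r, ∑ s, (∑ i, star (v i r) * u i s) * star (∑ i, star (v i r) * u i s))
      + (∑ i, ∑ j, (∑ r, star (v i r) * u j r) * star (∑ r, star (v i r) * u j r)) := by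
  have h := key2 (fun r i => u i r) (fun r i => v i r)
  rw [show (∑ r, ∑ i, u i r * star (u i r)) = ∑ i, ∑ r, u i r * star (u i r) from
        Finset.sum_comm,
      show (∑ r, ∑ i, star (v i r) * v i r) = ∑ i, ∑ r, star (v i r) * v i r from
        Finset.sum_comm,
      show (∑ r, ∑ i, star (v i r) * u i r) = ∑ i, ∑ r, star (v i r) * u i r from
        Finset.sum_comm] at h
  exact h

private lemma psd_sum {N ι : Type*} [Fintype N] [DecidableEq N] [Fintype ι]
    (F : ι → Matrix N N ℂ) (h : ∀ k, (F k).PosSemidef) : (∑ k, F k).PosSemidef :=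
  Finset.sum_induction F Matrix.PosSemidef (fun _ _ ha hb => ha.add hb)
    Matrix.PosSemidef.zero (fun k _ => h k)

private lemma kronCT {a b : Type*} (M : Matrix a a ℂ) (N : Matrix b b ℂ) :
    (M ⊗ₖ N)ᴴ = Mᴴ ⊗ₖ Nᴴ := by
  ext ⟨i, r⟩ ⟨j, s⟩
  simp [conjTranspose_apply, kroneckerMap_apply, star_mul']

private lemma ptrace1_herm {m n : ℕ} {A : Matrix (Fin m × Fin n) (Fin m × Fin n) ℂ}
    (h : A.IsHermitian) : (ptrace1 m n A).IsHermitian := by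
  ext r s
  simp only [conjTranspose_apply, ptrace1, Matrix.of_apply, star_sum]
  exact Finset.sum_congr rfl fun i _ => h.apply (i, r) (i, s)

private lemma ptrace2_herm {m n : ℕ} {A : Matrix (Fin m × Fin n) (Fin m × Fin n) ℂ}
    (h : A.IsHermitian) : (ptrace2 m n A).IsHermitian := by
  ext i j
  simp only [conjTranspose_apply, ptrace2, Matrix.of_apply, star_sum]
  exact Finset.sum_congr rfl fun r _ => h.apply (i, r) (j, r)

private lemma ptrace1_sum {m n : ℕ} {ι : Type*} [Fintype ι]
    (F : ι → Matrix (Fin m × Fin n) (Fin m × Fin n) ℂ) :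
    ptrace1 m n (∑ k, F k) = ∑ k, ptrace1 m n (F k) := by
  ext r s
  simp only [ptrace1, Matrix.of_apply, Matrix.sum_apply]
  exact Finset.sum_comm

private lemma ptrace2_sum {m n : ℕ} {ι : Type*} [Fintype ι]
    (F : ι → Matrix (Fin m × Fin n) (Fin m × Fin n) ℂ) :
    ptrace2 m n (∑ k, F k) = ∑ k, ptrace2 m n (F k) := by
  ext i j
  simp only [ptrace2, Matrix.of_apply, Matrix.sum_apply]
  exact Finset.sum_comm

private lemma kron_sum_right {m n : ℕ} {ι : Type*} [Fintype ι]
    (P : ι → Matrix (Fin n) (Fin n) ℂ) :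
    (1 : Matrix (Fin m) (Fin m) ℂ) ⊗ₖ (∑ k, P k)
      = ∑ k, (1 : Matrix (Fin m) (Fin m) ℂ) ⊗ₖ P k := by
  ext ⟨i, r⟩ ⟨j, s⟩
  simp [kroneckerMap_apply, Matrix.sum_apply, Finset.mul_sum]

private lemma kron_sum_left {m n : ℕ} {ι : Type*} [Fintype ι]
    (Q : ι → Matrix (Fin m) (Fin m) ℂ) :
    (∑ k, Q k) ⊗ₖ (1 : Matrix (Fin n) (Fin n) ℂ)
      = ∑ k, Q k ⊗ₖ (1 : Matrix (Fin n) (Fin n) ℂ) := by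
  ext ⟨i, r⟩ ⟨j, s⟩
  simp [kroneckerMap_apply, Matrix.sum_apply, Finset.sum_mul]

private lemma vmv_herm {N : Type*} (x : N → ℂ) : (vecMulVec x (star x)).IsHermitian := by
  ext p q
  simp only [conjTranspose_apply, vecMulVec_apply, Pi.star_apply, star_mul', star_star]
  ring

private lemma L1 (m n : ℕ) (x y : Fin m × Fin n → ℂ) :
    star y ⬝ᵥ (((vecMulVec x (star x)).trace •
        (1 : Matrix (Fin m × Fin n) (Fin m × Fin n) ℂ)) *ᵥ y)
    = (∑ i, ∑ r, x (i, r) * star (x (i, r))) * (∑ j, ∑ s, star (y (j, s)) * y (j, s)) := by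
  rw [smul_mulVec, one_mulVec, dotProduct_smul, smul_eq_mul]
  congr 1
  · simp [Matrix.trace, Matrix.diag, vecMulVec_apply, Pi.star_apply, Fintype.sum_prod_type]
  · simp [dotProduct, Pi.star_apply, Fintype.sum_prod_type]

private lemma L2 (m n : ℕ) (x y : Fin m × Fin n → ℂ) :
    star y ⬝ᵥ (vecMulVec x (star x) *ᵥ y)
    = (∑ i, ∑ r, star (y (i, r)) * x (i, r)) * star (∑ i, ∑ r, star (y (i, r)) * x (i, r)) := by
  simp only [dotProduct, mulVec, vecMulVec_apply, Pi.star_apply, star_sum, star_mul', star_star]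
  rw [Finset.sum_mul_sum]
  simp only [Finset.mul_sum, Finset.sum_mul, Fintype.sum_prod_type]
  refine Finset.sum_congr rfl fun i _ => ?_
  rw [show (∑ r, ∑ j, ∑ s, star (y (i, r)) * (x (i, r) * star (x (j, s)) * y (j, s)))
      = ∑ j, ∑ s, ∑ r, star (y (i, r)) * (x (i, r) * star (x (j, s)) * y (j, s)) from rot3 _]
  refine Finset.sum_congr rfl fun j _ => Finset.sum_congr rfl fun s _ =>
    Finset.sum_congr rfl fun r _ => by ring

private lemma L3 (m n : ℕ) (x y : Fin m × Fin n → ℂ) :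
    star y ⬝ᵥ (((1 : Matrix (Fin m) (Fin m) ℂ) ⊗ₖ ptrace1 m n (vecMulVec x (star x))) *ᵥ y)
    = ∑ i, ∑ j, (∑ r, star (y (i, r)) * x (j, r)) * star (∑ r, star (y (i, r)) * x (j, r)) := by
  simp only [dotProduct, mulVec, kroneckerMap_apply, Matrix.one_apply, ptrace1, Matrix.of_apply,
    vecMulVec_apply, Pi.star_apply, Fintype.sum_prod_type, ite_mul, one_mul, zero_mul,
    star_sum, star_mul', star_star]
  rw [show (∑ a : Fin m, ∑ b : Fin n, star (y (a, b)) *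
        ∑ c : Fin m, ∑ d : Fin n,
          if a = c then (∑ l, x (l, b) * star (x (l, d))) * y (c, d) else 0)
      = ∑ a : Fin m, ∑ b : Fin n, star (y (a, b)) *
        ∑ d : Fin n, ∑ c : Fin m,
          if a = c then (∑ l, x (l, b) * star (x (l, d))) * y (c, d) else 0 from
    Finset.sum_congr rfl fun a _ => Finset.sum_congr rfl fun b _ => by rw [Finset.sum_comm]]
  simp only [Finset.sum_ite_eq, Finset.mem_univ, if_true, Finset.sum_mul, Finset.mul_sum]
  refine Finset.sum_congr rfl fun i _ => ?_
  rw [show (∑ r : Fin n, ∑ s : Fin n, ∑ l : Fin m,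
        star (y (i, r)) * (x (l, r) * star (x (l, s)) * y (i, s)))
      = ∑ l, ∑ r, ∑ s, star (y (i, r)) * (x (l, r) * star (x (l, s)) * y (i, s)) from irot3 _]
  refine Finset.sum_congr rfl fun j _ => ?_
  rw [Finset.sum_comm]
  refine Finset.sum_congr rfl fun s _ => Finset.sum_congr rfl fun r _ => by ring

private lemma L4 (m n : ℕ) (x y : Fin m × Fin n → ℂ) :
    star y ⬝ᵥ ((ptrace2 m n (vecMulVec x (star x)) ⊗ₖ (1 : Matrix (Fin n) (Fin n) ℂ)) *ᵥ y)
    = ∑ r, ∑ s, (∑ i, star (y (i, r)) * x (i, s)) * star (∑ i, star (y (i, r)) * x (i, s)) := by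
  simp only [dotProduct, mulVec, kroneckerMap_apply, Matrix.one_apply, ptrace2, Matrix.of_apply,
    vecMulVec_apply, Pi.star_apply, Fintype.sum_prod_type, mul_ite, ite_mul, one_mul, mul_one,
    zero_mul, mul_zero, Finset.sum_ite_eq, Finset.mem_univ, if_true,
    star_sum, star_mul', star_star]
  rw [show (∑ r, ∑ s, (∑ i, star (y (i, r)) * x (i, s)) * ∑ j, y (j, r) * star (x (j, s)))
      = ∑ r, ∑ s, ∑ i, ∑ j, (star (y (i, r)) * x (i, s)) * (y (j, r) * star (x (j, s))) from
    Finset.sum_congr rfl fun r _ => Finset.sum_congr rfl fun s _ => Finset.sum_mul_sum _ _ _ _,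
    show (∑ r, ∑ s, ∑ i, ∑ j, (star (y (i, r)) * x (i, s)) * (y (j, r) * star (x (j, s))))
      = ∑ i, ∑ j, ∑ r, ∑ s, (star (y (i, r)) * x (i, s)) * (y (j, r) * star (x (j, s))) from
    swapblocks _]
  simp only [Finset.mul_sum, Finset.sum_mul]
  rw [show (∑ i, ∑ r, ∑ j, ∑ s,
        star (y (i, r)) * (x (i, s) * star (x (j, s)) * y (j, r)))
      = ∑ i, ∑ j, ∑ r, ∑ s, star (y (i, r)) * (x (i, s) * star (x (j, s)) * y (j, r)) from
    swapmid _]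
  refine Finset.sum_congr rfl fun i _ => Finset.sum_congr rfl fun j _ =>
    Finset.sum_congr rfl fun r _ => Finset.sum_congr rfl fun s _ => by ring

private lemma rankOne1 (m n : ℕ) (x : Fin m × Fin n → ℂ) :
    ((vecMulVec x (star x)).trace • (1 : Matrix (Fin m × Fin n) (Fin m × Fin n) ℂ)
      - vecMulVec x (star x)
      - ((1 : Matrix (Fin m) (Fin m) ℂ) ⊗ₖ ptrace1 m n (vecMulVec x (star x))
        - ptrace2 m n (vecMulVec x (star x)) ⊗ₖ (1 : Matrix (Fin n) (Fin n) ℂ))).PosSemidef := by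
  have hx := vmv_herm x
  have h1 := ptrace1_herm (m := m) (n := n) hx
  have h2 := ptrace2_herm (m := m) (n := n) hx
  have htr : star ((vecMulVec x (star x)).trace) = (vecMulVec x (star x)).trace := by
    rw [← Matrix.trace_conjTranspose, hx.eq]
  refine PosSemidef.of_dotProduct_mulVec_nonneg ?_ fun y => ?_
  · show _ᴴ = _
    rw [conjTranspose_sub, conjTranspose_sub, conjTranspose_sub, conjTranspose_smul,
      conjTranspose_one, kronCT, kronCT, conjTranspose_one, conjTranspose_one, h1.eq, h2.eq, hx.eq, htr]
  · rw [sub_mulVec, sub_mulVec, sub_mulVec, dotProduct_sub, dotProduct_sub, dotProduct_sub,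
      L1, L2, L3, L4]
    have h := key2 (fun i r => x (i, r)) (fun i r => y (i, r))
    beta_reduce at h
    have e : (∑ i, ∑ r, x (i, r) * star (x (i, r))) * (∑ j, ∑ s, star (y (j, s)) * y (j, s))
        - (∑ i, ∑ r, star (y (i, r)) * x (i, r)) * star (∑ i, ∑ r, star (y (i, r)) * x (i, r))
        - ((∑ i, ∑ j, (∑ r, star (y (i, r)) * x (j, r)) * star (∑ r, star (y (i, r)) * x (j, r)))
          - ∑ r, ∑ s, (∑ i, star (y (i, r)) * x (i, s)) * star (∑ i, star (y (i, r)) * x (i, s)))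
        = (∑ i, ∑ r, x (i, r) * star (x (i, r))) * (∑ j, ∑ s, star (y (j, s)) * y (j, s))
        - (∑ i, ∑ r, star (y (i, r)) * x (i, r)) * star (∑ i, ∑ r, star (y (i, r)) * x (i, r))
        - (∑ i, ∑ j, (∑ r, star (y (i, r)) * x (j, r)) * star (∑ r, star (y (i, r)) * x (j, r)))
        + (∑ r, ∑ s, (∑ i, star (y (i, r)) * x (i, s)) * star (∑ i, star (y (i, r)) * x (i, s))) := by
      ring
    rw [e]
    exact h

private lemma rankOne2 (m n : ℕ) (x : Fin m × Fin n → ℂ) :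
    ((vecMulVec x (star x)).trace • (1 : Matrix (Fin m × Fin n) (Fin m × Fin n) ℂ)
      - vecMulVec x (star x)
      - (ptrace2 m n (vecMulVec x (star x)) ⊗ₖ (1 : Matrix (Fin n) (Fin n) ℂ)
        - (1 : Matrix (Fin m) (Fin m) ℂ) ⊗ₖ ptrace1 m n (vecMulVec x (star x)))).PosSemidef := by
  have hx := vmv_herm x
  have h1 := ptrace1_herm (m := m) (n := n) hx
  have h2 := ptrace2_herm (m := m) (n := n) hx
  have htr : star ((vecMulVec x (star x)).trace) = (vecMulVec x (star x)).trace := by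
    rw [← Matrix.trace_conjTranspose, hx.eq]
  refine PosSemidef.of_dotProduct_mulVec_nonneg ?_ fun y => ?_
  · show _ᴴ = _
    rw [conjTranspose_sub, conjTranspose_sub, conjTranspose_sub, conjTranspose_smul,
      conjTranspose_one, kronCT, kronCT, conjTranspose_one, conjTranspose_one, h1.eq, h2.eq, hx.eq, htr]
  · rw [sub_mulVec, sub_mulVec, sub_mulVec, dotProduct_sub, dotProduct_sub, dotProduct_sub,
      L1, L2, L3, L4]
    have h := key2' (fun i r => x (i, r)) (fun i r => y (i, r))
    beta_reduce at h
    have e : (∑ i, ∑ r, x (i, r) * star (x (i, r))) * (∑ j, ∑ s, star (y (j, s)) * y (j, s))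
        - (∑ i, ∑ r, star (y (i, r)) * x (i, r)) * star (∑ i, ∑ r, star (y (i, r)) * x (i, r))
        - ((∑ r, ∑ s, (∑ i, star (y (i, r)) * x (i, s)) * star (∑ i, star (y (i, r)) * x (i, s)))
          - ∑ i, ∑ j, (∑ r, star (y (i, r)) * x (j, r)) * star (∑ r, star (y (i, r)) * x (j, r)))
        = (∑ i, ∑ r, x (i, r) * star (x (i, r))) * (∑ j, ∑ s, star (y (j, s)) * y (j, s))
        - (∑ i, ∑ r, star (y (i, r)) * x (i, r)) * star (∑ i, ∑ r, star (y (i, r)) * x (i, r))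
        - (∑ r, ∑ s, (∑ i, star (y (i, r)) * x (i, s)) * star (∑ i, star (y (i, r)) * x (i, s)))
        + (∑ i, ∑ j, (∑ r, star (y (i, r)) * x (j, r)) * star (∑ r, star (y (i, r)) * x (j, r))) := by
      ring
    rw [e]
    exact h

/-- If `A` is positive semidefinite, then
`(tr A) I_{mn} − A ≥ ± (Iₘ ⊗ (tr₁ A) − (tr₂ A) ⊗ Iₙ)`. -/
theorem stmt_13 (m n : ℕ) (A : Matrix (Fin m × Fin n) (Fin m × Fin n) ℂ)
    (hA : A.PosSemidef) :
    (A.trace • (1 : Matrix (Fin m × Fin n) (Fin m × Fin n) ℂ) - A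
      - ((1 : Matrix (Fin m) (Fin m) ℂ) ⊗ₖ ptrace1 m n A
        - ptrace2 m n A ⊗ₖ (1 : Matrix (Fin n) (Fin n) ℂ))).PosSemidef ∧
    (A.trace • (1 : Matrix (Fin m × Fin n) (Fin m × Fin n) ℂ) - A
      - (ptrace2 m n A ⊗ₖ (1 : Matrix (Fin n) (Fin n) ℂ)
        - (1 : Matrix (Fin m) (Fin m) ℂ) ⊗ₖ ptrace1 m n A)).PosSemidef := by
  obtain ⟨r, v, hv⟩ := Matrix.posSemidef_iff_eq_sum_vecMulVec.mp hA
  have hAs : A = ∑ k, vecMulVec (v k) (star (v k)) := hv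
  constructor
  · rw [hAs, Matrix.trace_sum, ptrace1_sum, ptrace2_sum, kron_sum_right, kron_sum_left,
      Finset.sum_smul]
    simp only [← Finset.sum_sub_distrib]
    exact psd_sum _ fun k => rankOne1 m n _
  · rw [hAs, Matrix.trace_sum, ptrace1_sum, ptrace2_sum, kron_sum_right, kron_sum_left,
      Finset.sum_smul]
    simp only [← Finset.sum_sub_distrib]
    exact psd_sum _ fun k => rankOne2 m n _
end

section
/- Let X = (x_{ij}) be a real m×n matrix. Then mn · ∑_{i=1}^m ∑_{j=1}^n x_{ij}² − n · ∑_{j=1}^n (∑_{i=1}^m x_{ij})² ≥ | m · ∑_{i=1}^m (∑_{j=1}^n x_{ij})² − (∑_{i=1}^m ∑_{j=1}^n x_{ij})² |. -/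
private lemma helper14 (k : ℕ) (f : Fin k → ℝ) :
    (k : ℝ) * ∑ i, f i ^ 2 - (∑ i, f i) ^ 2 = (1/2) * ∑ i, ∑ j, (f i - f j) ^ 2 := by
  have h : ∀ i : Fin k, ∑ j, (f i - f j) ^ 2
      = (k : ℝ) * f i ^ 2 - 2 * f i * (∑ j, f j) + ∑ j, f j ^ 2 := by
    intro i
    have h1 : ∀ j ∈ Finset.univ, (f i - f j) ^ 2 = f i ^ 2 - 2 * f i * f j + f j ^ 2 := by
      intro j _; ring
    rw [Finset.sum_congr rfl h1, Finset.sum_add_distrib, Finset.sum_sub_distrib,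
      ← Finset.mul_sum]
    simp [Finset.card_univ]
  rw [Finset.sum_congr rfl (fun i _ => h i), Finset.sum_add_distrib, Finset.sum_sub_distrib,
    ← Finset.mul_sum]
  have hS : ∑ i, 2 * f i * (∑ j, f j) = 2 * (∑ i, f i) ^ 2 := by
    rw [← Finset.sum_mul, ← Finset.mul_sum]; ring
  rw [hS]
  simp [Finset.card_univ]
  ring

private lemma csq14 (n : ℕ) (d : Fin n → ℝ) :
    (∑ j, d j) ^ 2 ≤ (n : ℝ) * ∑ j, d j ^ 2 := by
  have := sq_sum_le_card_mul_sum_sq (s := (Finset.univ : Finset (Fin n))) (f := d)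
  simpa using this

/-- Generalized Cauchy–Khinchin inequality: for a real `m × n` matrix `X = (xᵢⱼ)`,
`mn ∑ᵢⱼ xᵢⱼ² − n ∑ⱼ (∑ᵢ xᵢⱼ)² ≥ |m ∑ᵢ (∑ⱼ xᵢⱼ)² − (∑ᵢⱼ xᵢⱼ)²|`. -/
theorem stmt_14 (m n : ℕ) (x : Fin m → Fin n → ℝ) :
    (m : ℝ) * n * (∑ i, ∑ j, x i j ^ 2) - n * ∑ j, (∑ i, x i j) ^ 2 ≥
      |(m : ℝ) * ∑ i, (∑ j, x i j) ^ 2 - (∑ i, ∑ j, x i j) ^ 2| := by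
  have h0 : 0 ≤ (m : ℝ) * ∑ i, (∑ j, x i j) ^ 2 - (∑ i, ∑ j, x i j) ^ 2 :=
    sub_nonneg.2 (csq14 m (fun i => ∑ j, x i j))
  rw [abs_of_nonneg h0]
  have hA : (m : ℝ) * ∑ i, (∑ j, x i j) ^ 2 - (∑ i, ∑ j, x i j) ^ 2
      = (1/2) * ∑ i, ∑ k, (∑ j, (x i j - x k j)) ^ 2 := by
    rw [helper14 m (fun i => ∑ j, x i j)]
    simp [Finset.sum_sub_distrib]
  have hL : (m : ℝ) * n * (∑ i, ∑ j, x i j ^ 2) - n * ∑ j, (∑ i, x i j) ^ 2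
      = (1/2) * ∑ i, ∑ k, (n : ℝ) * ∑ j, (x i j - x k j) ^ 2 := by
    have swap : (∑ i, ∑ j, x i j ^ 2) = ∑ j, ∑ i, x i j ^ 2 := Finset.sum_comm
    have hcol : ∀ j ∈ Finset.univ, (m : ℝ) * ∑ i, x i j ^ 2 - (∑ i, x i j) ^ 2
        = (1/2) * ∑ i, ∑ k, (x i j - x k j) ^ 2 := fun j _ => helper14 m (fun i => x i j)
    have step1 : (m : ℝ) * n * (∑ i, ∑ j, x i j ^ 2) - n * ∑ j, (∑ i, x i j) ^ 2
        = (n : ℝ) * ∑ j, ((m : ℝ) * ∑ i, x i j ^ 2 - (∑ i, x i j) ^ 2) := by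
      rw [swap, Finset.sum_sub_distrib, mul_sub]
      congr 1
      rw [Finset.mul_sum, Finset.mul_sum]
      exact Finset.sum_congr rfl fun j _ => by ring
    rw [step1, Finset.sum_congr rfl hcol]
    have e1 : ∑ i, ∑ k, (n : ℝ) * ∑ j, (x i j - x k j) ^ 2
        = (n : ℝ) * ∑ i, ∑ k, ∑ j, (x i j - x k j) ^ 2 := by
      rw [Finset.mul_sum]
      exact Finset.sum_congr rfl fun i _ => by rw [Finset.mul_sum]
    have e2 : ∑ j, (1/2 : ℝ) * ∑ i, ∑ k, (x i j - x k j) ^ 2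
        = (1/2 : ℝ) * ∑ j, ∑ i, ∑ k, (x i j - x k j) ^ 2 := (Finset.mul_sum _ _ _).symm
    have comm3 : ∑ j, ∑ i, ∑ k, (x i j - x k j) ^ 2
        = ∑ i, ∑ k, ∑ j, (x i j - x k j) ^ 2 := by
      rw [Finset.sum_comm]
      exact Finset.sum_congr rfl (fun i _ => Finset.sum_comm)
    rw [e2, e1, comm3]
    ring
  rw [hA, hL, ge_iff_le]
  apply mul_le_mul_of_nonneg_left _ (by norm_num)
  refine Finset.sum_le_sum fun i _ => Finset.sum_le_sum fun k _ => ?_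
  exact csq14 n (fun j => x i j - x k j)
end

section
/- For any positive integers m and n, the (mn)×(mn) real matrices J_m ⊗ J_n, m n I_{mn} − n (J_m ⊗ I_n) − m (I_m ⊗ J_n) + J_m ⊗ J_n, and m n I_{mn} − n (J_m ⊗ I_n) + m (I_m ⊗ J_n) − J_m ⊗ J_n are all positive semidefinite, where J_k is the k×k all-ones matrix. (This is the specialization A = J_m ⊗ J_n of the main inequality, used to derive the generalized Cauchy–Khinchin inequalities.) -/
open Matrix Kronecker

/-- The `k × k` all-ones real matrix. -/
def allOnes (k : ℕ) : Matrix (Fin k) (Fin k) ℝ :=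
  Matrix.of fun _ _ => 1

lemma psd_allOnes (k : ℕ) : (allOnes k).PosSemidef := by
  have : allOnes k = (Matrix.of fun (_ : Fin 1) (_ : Fin k) => (1:ℝ))ᴴ *
      (Matrix.of fun (_ : Fin 1) (_ : Fin k) => (1:ℝ)) := by
    ext i j
    simp [allOnes, Matrix.mul_apply]
  rw [this]
  exact Matrix.posSemidef_conjTranspose_mul_self _

lemma kron_psd {m n : ℕ} {A : Matrix (Fin m) (Fin m) ℝ} {B : Matrix (Fin n) (Fin n) ℝ}
    (hA : A.PosSemidef) (hB : B.PosSemidef) : (A ⊗ₖ B).PosSemidef := by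
  exact hA.kronecker hB

lemma psd_sub (k : ℕ) : (((k:ℝ)) • (1 : Matrix (Fin k) (Fin k) ℝ) - allOnes k).PosSemidef := by
  refine Matrix.PosSemidef.of_dotProduct_mulVec_nonneg ?_ ?_
  · apply Matrix.IsHermitian.sub
    · ext i j; simp [Matrix.conjTranspose_apply, Matrix.one_apply, eq_comm]
    · ext i j; simp [allOnes, Matrix.conjTranspose_apply]
  · intro x
    simp only [Matrix.sub_mulVec, Matrix.smul_mulVec, Matrix.one_mulVec,
      dotProduct_sub, dotProduct_smul, star_trivial]
    have h1 : x ⬝ᵥ (allOnes k) *ᵥ x = (∑ i, x i) * (∑ i, x i) := by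
      simp [dotProduct, Matrix.mulVec, allOnes, Finset.sum_mul]
    have h2 : x ⬝ᵥ x = ∑ i, x i * x i := rfl
    rw [h1, h2]
    have := sq_sum_le_card_mul_sum_sq (s := Finset.univ) (f := x)
    simp only [Finset.card_univ, Fintype.card_fin, sq] at this
    simp only [smul_eq_mul, sub_nonneg]
    calc (∑ i, x i) * (∑ i, x i) ≤ (k:ℝ) * ∑ i, x i * x i := by
          simpa [sq, Finset.mul_sum] using this
      _ = (k:ℝ) * ∑ i, x i * x i := rfl

lemma psd_add (k : ℕ) : (((k:ℝ)) • (1 : Matrix (Fin k) (Fin k) ℝ) + allOnes k).PosSemidef := by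
  apply Matrix.PosSemidef.add _ (psd_allOnes k)
  refine Matrix.PosSemidef.of_dotProduct_mulVec_nonneg ?_ ?_
  · ext i j; simp [Matrix.conjTranspose_apply, Matrix.one_apply, eq_comm]
  · intro x
    simp only [Matrix.smul_mulVec, Matrix.one_mulVec, dotProduct_smul, star_trivial,
      smul_eq_mul]
    have : (0:ℝ) ≤ x ⬝ᵥ x := by
      simp only [dotProduct]
      exact Finset.sum_nonneg fun i _ => mul_self_nonneg _
    positivity

/-- For positive integers `m`, `n`, the matrices `Jₘ ⊗ Jₙ`,
`mn I − n (Jₘ ⊗ Iₙ) − m (Iₘ ⊗ Jₙ) + Jₘ ⊗ Jₙ`, and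
`mn I − n (Jₘ ⊗ Iₙ) + m (Iₘ ⊗ Jₙ) − Jₘ ⊗ Jₙ` are positive semidefinite. -/
theorem stmt_16 (m n : ℕ) (hm : 0 < m) (hn : 0 < n) :
    (allOnes m ⊗ₖ allOnes n).PosSemidef ∧
    (((m : ℝ) * n) • (1 : Matrix (Fin m × Fin n) (Fin m × Fin n) ℝ)
      - (n : ℝ) • (allOnes m ⊗ₖ (1 : Matrix (Fin n) (Fin n) ℝ))
      - (m : ℝ) • ((1 : Matrix (Fin m) (Fin m) ℝ) ⊗ₖ allOnes n)
      + allOnes m ⊗ₖ allOnes n).PosSemidef ∧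
    (((m : ℝ) * n) • (1 : Matrix (Fin m × Fin n) (Fin m × Fin n) ℝ)
      - (n : ℝ) • (allOnes m ⊗ₖ (1 : Matrix (Fin n) (Fin n) ℝ))
      + (m : ℝ) • ((1 : Matrix (Fin m) (Fin m) ℝ) ⊗ₖ allOnes n)
      - allOnes m ⊗ₖ allOnes n).PosSemidef := by
  refine ⟨kron_psd (psd_allOnes m) (psd_allOnes n), ?_, ?_⟩
  · have h : (((m : ℝ) * n) • (1 : Matrix (Fin m × Fin n) (Fin m × Fin n) ℝ)
      - (n : ℝ) • (allOnes m ⊗ₖ (1 : Matrix (Fin n) (Fin n) ℝ))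
      - (m : ℝ) • ((1 : Matrix (Fin m) (Fin m) ℝ) ⊗ₖ allOnes n)
      + allOnes m ⊗ₖ allOnes n)
      = (((m:ℝ)) • (1 : Matrix (Fin m) (Fin m) ℝ) - allOnes m) ⊗ₖ
        (((n:ℝ)) • (1 : Matrix (Fin n) (Fin n) ℝ) - allOnes n) := by
      ext ⟨i1, i2⟩ ⟨j1, j2⟩
      simp [allOnes, Matrix.kroneckerMap_apply, Matrix.one_apply, Prod.mk.injEq]
      split_ifs <;> simp_all <;> ring
    rw [h]
    exact kron_psd (psd_sub m) (psd_sub n)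
  · have h : (((m : ℝ) * n) • (1 : Matrix (Fin m × Fin n) (Fin m × Fin n) ℝ)
      - (n : ℝ) • (allOnes m ⊗ₖ (1 : Matrix (Fin n) (Fin n) ℝ))
      + (m : ℝ) • ((1 : Matrix (Fin m) (Fin m) ℝ) ⊗ₖ allOnes n)
      - allOnes m ⊗ₖ allOnes n)
      = (((m:ℝ)) • (1 : Matrix (Fin m) (Fin m) ℝ) - allOnes m) ⊗ₖ
        (((n:ℝ)) • (1 : Matrix (Fin n) (Fin n) ℝ) + allOnes n) := by
      ext ⟨i1, i2⟩ ⟨j1, j2⟩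
      simp [allOnes, Matrix.kroneckerMap_apply, Matrix.one_apply, Prod.mk.injEq]
      split_ifs <;> simp_all <;> ring
    rw [h]
    exact kron_psd (psd_sub m) (psd_add n)
end
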